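/- Suppose smooth complex-valued functions Ψ₁, and connection coefficients α',β,ε,ε',ρ,ρ',τ,π',μ,μ',λ',σ',κ',γ,γ',ν,ν' on a 4-manifold satisfy: the commutator relation [δ,D] = (ρ'+ε'−ε)δ + σ∂ + κΔ + (α'+β+π')D with κ = σ = 0, the Newman-Penrose equations Dβ = δε − α'ε − βε' − γκ − κμ − επ' − βρ' − ασ + πσ − Ψ₁, δρ = ∂σ + κμ' − κμ + α'ρ + βρ − 3ασ + β'σ − ρ'τ + ρτ − Ψ₁ − P₁₄, Dτ = Δκ − γ'κ − 3γκ + π'ρ + πσ − στ' − ε'τ + ετ − ρτ − Ψ₁ + P₁₄ (with κ = σ = 0), together with δΨ₁ = 2(β + 2τ)Ψ₁ and DΨ₁ = 2(ε − 2ρ)Ψ₁. Then Ψ₁ ≡ 0. -/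
import Mathlib


/-!
STATEMENT 10: (Lemma in the Goldberg-Sachs theorem.) Suppose complex-valued
functions Ψ₁ and the Newman-Penrose connection coefficients on a 4-manifold
satisfy: the commutator relation
[δ,D] = (ρ'+ε'−ε)δ + σ∂ + κΔ + (α'+β+π')D with κ = σ = 0, the Newman-Penrose
equations (np2), (np3), (np4), together with δΨ₁ = 2(β + 2τ)Ψ₁ and
DΨ₁ = 2(ε − 2ρ)Ψ₁. Then Ψ₁ ≡ 0.

We model the algebra of functions on the manifold as `M → ℂ` and the frame vector
fields δ, ∂, Δ, D as derivations of this algebra.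
-/

theorem goldberg_sachs_key_lemma
    (M : Type*)
    (δ Dp Dn D : Derivation ℂ (M → ℂ) (M → ℂ))
    (α α' β β' γ γ' ε ε' κ μ π π' ρ ρ' σ τ τ' Ψ₁ P₁₄ : M → ℂ)
    (hκ : κ = 0) (hσ : σ = 0)
    -- commutator relation [δ,D] = (ρ'+ε'−ε)δ + σ∂ + κΔ + (α'+β+π')D
    (hcomm : ∀ f : M → ℂ,
      δ (D f) - D (δ f) =
        (ρ' + ε' - ε) * δ f + σ * Dp f + κ * Dn f + (α' + β + π') * D f)
    -- (np2): Dβ = δε − α'ε − βε' − γκ − κμ − επ' − βρ' − ασ + πσ − Ψ₁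
    (hnp2 : D β = δ ε - α' * ε - β * ε' - γ * κ - κ * μ - ε * π' - β * ρ'
        - α * σ + π * σ - Ψ₁)
    -- (np3): δρ = ∂σ + κμ' − κμ + α'ρ + βρ − 3ασ + β'σ − ρ'τ + ρτ − Ψ₁ − P₁₄
    (μ' : M → ℂ)
    (hnp3 : δ ρ = Dp σ + κ * μ' - κ * μ + α' * ρ + β * ρ - 3 * α * σ + β' * σ
        - ρ' * τ + ρ * τ - Ψ₁ - P₁₄)
    -- (np4): Dτ = Δκ − γ'κ − 3γκ + π'ρ + πσ − στ' − ε'τ + ετ − ρτ − Ψ₁ + P₁₄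
    (hnp4 : D τ = Dn κ - γ' * κ - 3 * γ * κ + π' * ρ + π * σ - σ * τ'
        - ε' * τ + ε * τ - ρ * τ - Ψ₁ + P₁₄)
    (hδΨ : δ Ψ₁ = 2 * (β + 2 * τ) * Ψ₁)
    (hDΨ : D Ψ₁ = 2 * (ε - 2 * ρ) * Ψ₁) :
    Ψ₁ = 0 := by
  subst hκ hσ
  have h2 : ∀ (E : Derivation ℂ (M → ℂ) (M → ℂ)), E 2 = 0 := by
    intro E
    rw [show (2 : M → ℂ) = 1 + 1 by norm_num, map_add, Derivation.map_one_eq_zero, add_zero]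
  have e1 := hcomm Ψ₁
  rw [hDΨ, hδΨ] at e1
  simp only [Derivation.leibniz, map_sub, map_add, smul_eq_mul, h2, Derivation.map_smul,
    zero_mul, mul_zero, zero_add, add_zero, zero_sub, sub_zero] at e1
  rw [hδΨ, hDΨ, hnp2, hnp3, hnp4] at e1
  simp only [map_zero] at e1
  have key : (10 : M → ℂ) * (Ψ₁ * Ψ₁) = 0 := by linear_combination e1
  funext x
  have h := congrFun key x
  simp only [Pi.mul_apply, Pi.zero_apply, Pi.ofNat_apply] at h
  have h10 : (10 : ℂ) ≠ 0 := by norm_num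
  have := mul_eq_zero.mp h
  rcases this with h' | h'
  · exact absurd h' h10
  · exact mul_self_eq_zero.mp h'
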